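/- For all λ₁, λ₂, λ₃ ∈ [0,1], the Host strategy Q*_{λ₁,λ₂,λ₃} = (λ₁/3, (1−λ₁)/3, λ₂/3, (1−λ₂)/3, λ₃/3, (1−λ₃)/3) is a minimax strategy: for every mixed strategy P of Contestant, E(P, Q*_{λ₁,λ₂,λ₃}) ≤ 2/3. -/

import Mathlib

open Finset

/-- Contestant's payoff matrix for the Monty Hall zero-sum game.
Rows: 1SS,1SN,1NS,1NN,2SS,2SN,2NS,2NN,3SS,3SN,3NS,3NN.
Columns: 1L,1R,2L,2R,3L,3R. -/
def C : Fin 12 → Fin 6 → ℝ :=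
  ![![0,0,1,1,1,1],
    ![0,1,0,0,1,1],
    ![1,0,1,1,0,0],
    ![1,1,0,0,0,0],
    ![1,1,0,0,1,1],
    ![0,0,0,1,1,1],
    ![1,1,1,0,0,0],
    ![0,0,1,1,0,0],
    ![1,1,1,1,0,0],
    ![0,0,1,1,0,1],
    ![1,1,0,0,1,0],
    ![0,0,0,0,1,1]]

/-- A mixed strategy for Contestant. -/
def IsMixedC (P : Fin 12 → ℝ) : Prop := (∀ i, 0 ≤ P i) ∧ ∑ i, P i = 1

/-- A mixed strategy for Host. -/
def IsMixedH (Q : Fin 6 → ℝ) : Prop := (∀ j, 0 ≤ Q j) ∧ ∑ j, Q j = 1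

/-- Expected payoff (Contestant's winning probability) under profile (P,Q). -/
def E (P : Fin 12 → ℝ) (Q : Fin 6 → ℝ) : ℝ := ∑ i, ∑ j, P i * C i j * Q j

/-- Every Host strategy Q*_{λ₁,λ₂,λ₃} with 0 ≤ λ_X ≤ 1 is minimax:
the expected payoff against any Contestant mixed strategy is at most 2/3. -/
theorem Qstar_lambda_minimax :
    ∀ l₁ l₂ l₃ : ℝ, l₁ ∈ Set.Icc (0:ℝ) 1 → l₂ ∈ Set.Icc (0:ℝ) 1 →
      l₃ ∈ Set.Icc (0:ℝ) 1 →
      ∀ P : Fin 12 → ℝ, IsMixedC P →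
        E P ![l₁/3, (1 - l₁)/3, l₂/3, (1 - l₂)/3, l₃/3, (1 - l₃)/3] ≤ 2/3 := by
  rintro l₁ l₂ l₃ ⟨h1a,h1b⟩ ⟨h2a,h2b⟩ ⟨h3a,h3b⟩ P ⟨hP, hs⟩
  have h0 := hP 0; have h1 := hP 1; have h2 := hP 2
  have h3 := hP (Fin.succ 2)
  have h4 := hP (Fin.succ 2).succ
  have h5 := hP (Fin.succ 2).succ.succ
  have h6 := hP (Fin.succ 2).succ.succ.succ
  have h7 := hP (Fin.succ 2).succ.succ.succ.succ
  have h8 := hP (Fin.succ 2).succ.succ.succ.succ.succ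
  have h9 := hP (Fin.succ 2).succ.succ.succ.succ.succ.succ
  have h10 := hP (Fin.succ 2).succ.succ.succ.succ.succ.succ.succ
  have h11 := hP (Fin.succ 2).succ.succ.succ.succ.succ.succ.succ.succ
  simp [E, C, Fin.sum_univ_succ] at hs ⊢
  change 0 ≤ P 3 at h3
  change 0 ≤ P 4 at h4
  change 0 ≤ P 5 at h5
  change 0 ≤ P 6 at h6
  change 0 ≤ P 7 at h7
  change 0 ≤ P 8 at h8
  change 0 ≤ P 9 at h9
  change 0 ≤ P 10 at h10
  change 0 ≤ P 11 at h11
  nlinarith [mul_nonneg h1 (sub_nonneg.2 h1b), mul_nonneg h2 h1a,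
    mul_nonneg h5 (sub_nonneg.2 h2b), mul_nonneg h6 h2a,
    mul_nonneg h9 (sub_nonneg.2 h3b), mul_nonneg h10 h3a,
    mul_nonneg h3 h1a, mul_nonneg h3 (sub_nonneg.2 h1b),
    mul_nonneg h7 h2a, mul_nonneg h7 (sub_nonneg.2 h2b),
    mul_nonneg h11 h3a, mul_nonneg h11 (sub_nonneg.2 h3b)]
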